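/- Let r ≥ 3, d ≥ 3 and m ≥ d + 2, and set b = ⌈d/2⌉. Let T_{(m,d,r)}(b) be the r-uniform supertree obtained from the loose path P_d^r by attaching m − d pendant edges at a fixed core (non-joint) vertex u of the edge e_b of the path, i.e. adding m − d new edges each consisting of u together with r − 1 new vertices. Then φ(T_{(m,d,r)}(b), x) = x^{(m−d)(r−1)}·φ(P_d^r, x) − (m−d)·x^{(m−d)(r−1)−2}·φ(P_{b−1}^r, x)·φ(P_{d−b}^r, x). -/

import Mathlib

open Classical

noncomputable section

/-- A finite hypergraph: a finite vertex set together with a finite set of edges,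
each edge being a finite set of vertices. -/
structure FinHypergraph (α : Type*) where
  verts : Finset α
  edges : Finset (Finset α)

namespace FinHypergraph

variable {α : Type*}

/-- Every edge of `H` is a subset of the vertex set of `H`. -/
def WellFormed (H : FinHypergraph α) : Prop := ∀ e ∈ H.edges, e ⊆ H.verts

/-- `H` is `r`-uniform: every edge has exactly `r` vertices. -/
def Uniform (H : FinHypergraph α) (r : ℕ) : Prop := ∀ e ∈ H.edges, e.card = r

/-- A set of edges is a matching if its members are pairwise disjoint. -/
def IsMatchingSet (M : Finset (Finset α)) : Prop :=
  ∀ e ∈ M, ∀ f ∈ M, e ≠ f → Disjoint e f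

/-- `m(H,k)`: the number of matchings of `H` consisting of exactly `k` edges. -/
noncomputable def matchCount (H : FinHypergraph α) (k : ℕ) : ℕ :=
  (H.edges.powerset.filter (fun M => M.card = k ∧ IsMatchingSet M)).card

/-- The matching polynomial `φ(H,x) = Σ_k (-1)^k m(H,k) x^(n - r·k)` of an
`r`-uniform hypergraph `H` with `n` vertices, evaluated at a real number `x`. -/
noncomputable def matchPoly (H : FinHypergraph α) (r : ℕ) (x : ℝ) : ℝ :=
  ∑ k ∈ Finset.range (H.verts.card + 1),
    (-1 : ℝ) ^ k * (H.matchCount k : ℝ) * x ^ (H.verts.card - r * k)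

/-- `H − S`: delete the vertices of `S` and all edges meeting `S`. -/
def removeVerts (H : FinHypergraph α) (S : Finset α) : FinHypergraph α :=
  ⟨H.verts \ S, H.edges.filter (fun e => Disjoint e S)⟩

/-- The edges of the `r`-uniform loose path of length `p` along the vertex labelling `w`:
the `i`-th edge consists of the `r` vertices `w (i*(r-1)), …, w ((i+1)*(r-1))`, so that
consecutive edges share exactly one vertex. -/
def loosePathEdges (r p : ℕ) (w : ℕ → α) : Finset (Finset α) :=
  (Finset.range p).image (fun i => (Finset.Icc (i * (r - 1)) ((i + 1) * (r - 1))).image w)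

/-- `P` is an `r`-uniform loose path with `m` edges (`P_m^r`); for `m = 0` it is a single
vertex with no edge. -/
def IsLoosePath (r m : ℕ) (P : FinHypergraph α) : Prop :=
  ∃ w : ℕ → α, Set.InjOn w (Set.Iic (m * (r - 1))) ∧
    P.verts = (Finset.Icc 0 (m * (r - 1))).image w ∧
    P.edges = loosePathEdges r m w

/-- The `r`-uniform loose path with `m` edges realized along the vertex labelling `w`. -/
def pathHypergraph (r m : ℕ) (w : ℕ → α) : FinHypergraph α :=
  ⟨(Finset.Icc 0 (m * (r - 1))).image w, loosePathEdges r m w⟩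

/-- `T` is obtained from `H` by attaching `k` pendant edges at the vertex `u`: each new
edge consists of `u` together with `r - 1` new vertices, the new vertices of distinct new
edges being distinct. -/
def IsPendantEdgesAttach (r k : ℕ) (H : FinHypergraph α) (u : α) (T : FinHypergraph α) : Prop :=
  u ∈ H.verts ∧ ∃ F : Fin k → Finset α,
    (∀ i, (F i).card = r - 1) ∧
    (∀ i, Disjoint (F i) H.verts) ∧
    (∀ i j, i ≠ j → Disjoint (F i) (F j)) ∧
    T.verts = H.verts ∪ Finset.univ.biUnion F ∧
    T.edges = H.edges ∪ Finset.univ.image (fun i => insert u (F i))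

end FinHypergraph

open FinHypergraph

namespace MPAux
open FinHypergraph
set_option linter.unusedSectionVars false


/-- no two consecutive elements -/
def Sparse (I : Finset ℕ) : Prop := ∀ a ∈ I, a + 1 ∉ I

def sparseSets (p : ℕ) : Finset (Finset ℕ) :=
  (Finset.range p).powerset.filter Sparse

lemma mem_sparseSets {p : ℕ} {I : Finset ℕ} :
    I ∈ sparseSets p ↔ I ⊆ Finset.range p ∧ Sparse I := by
  simp [sparseSets]

lemma sparse_two_card {p : ℕ} {I : Finset ℕ} (hI : I ∈ sparseSets p) :
    2 * I.card ≤ p + 1 := by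
  rw [mem_sparseSets] at hI
  obtain ⟨hsub, hsp⟩ := hI
  have hinj : Set.InjOn (fun a => a / 2) I := by
    intro a ha b hb hab
    simp only at hab
    by_contra hne
    rcases Nat.lt_or_ge a b with h | h
    · have hb1 : b = a + 1 := by omega
      exact hsp a ha (hb1 ▸ hb)
    · have : b < a := by omega
      have hb1 : a = b + 1 := by omega
      exact hsp b hb (hb1 ▸ ha)
  have h1 : I.card = (I.image (fun a => a / 2)).card :=
    (Finset.card_image_of_injOn hinj).symm
  have h2 : I.image (fun a => a / 2) ⊆ Finset.range ((p + 1) / 2) := by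
    intro t ht
    rcases Finset.mem_image.1 ht with ⟨a, ha, rfl⟩
    have := Finset.mem_range.1 (hsub ha)
    simp only [Finset.mem_range]
    omega
  have := Finset.card_le_card h2
  rw [Finset.card_range] at this
  omega

lemma sparse_r_card {r p : ℕ} (hr : 2 ≤ r) {I : Finset ℕ} (hI : I ∈ sparseSets p) :
    r * I.card ≤ p * (r - 1) + 1 := by
  have h2 := sparse_two_card hI
  have hcard : I.card ≤ p := Finset.card_le_card (mem_sparseSets.1 hI).1 |>.trans
    (by rw [Finset.card_range])
  nlinarith [Nat.sub_add_cancel (by omega : 1 ≤ r)]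


/-- the set of matchings inside an edge set -/
def matchings {α : Type*} (E : Finset (Finset α)) : Finset (Finset (Finset α)) :=
  E.powerset.filter IsMatchingSet

lemma mem_matchings {α : Type*} {E : Finset (Finset α)} {M : Finset (Finset α)} :
    M ∈ matchings E ↔ M ⊆ E ∧ IsMatchingSet M := by
  simp [matchings]

lemma matching_card_bound {α : Type*} {V : Finset α} {E : Finset (Finset α)} {r : ℕ}
    (hwf : ∀ e ∈ E, e ⊆ V) (hun : ∀ e ∈ E, e.card = r)
    {M : Finset (Finset α)} (hM : M ∈ matchings E) : r * M.card ≤ V.card := by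
  rw [mem_matchings] at hM
  obtain ⟨hsub, hm⟩ := hM
  have hdisj : ∀ e ∈ M, ∀ f ∈ M, e ≠ f → Disjoint (id e) (id f) := hm
  have h1 : (M.biUnion id).card = ∑ e ∈ M, (id e).card :=
    Finset.card_biUnion hdisj
  have h2 : ∑ e ∈ M, (id e).card = r * M.card := by
    have : ∀ e ∈ M, (id e).card = r := fun e he => hun e (hsub he)
    rw [Finset.sum_congr rfl this, Finset.sum_const, smul_eq_mul, mul_comm]
  have h3 : M.biUnion id ⊆ V := by
    intro a ha
    rcases Finset.mem_biUnion.1 ha with ⟨e, he, hae⟩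
    exact hwf e (hsub he) hae
  calc r * M.card = (M.biUnion id).card := by rw [h1, h2]
    _ ≤ V.card := Finset.card_le_card h3

/-- generic matching-sum -/
def msum {α : Type*} (r : ℕ) (E : Finset (Finset α)) (n : ℕ) (x : ℝ) : ℝ :=
  ∑ M ∈ matchings E, (-1 : ℝ) ^ M.card * x ^ (n - r * M.card)

lemma matchPoly_eq_msum {α : Type*} {H : FinHypergraph α} {r : ℕ} (hr : 1 ≤ r)
    (hwf : H.WellFormed) (hun : H.Uniform r) (x : ℝ) :
    H.matchPoly r x = msum r H.edges H.verts.card x := by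
  rw [matchPoly, msum]
  rw [← Finset.sum_fiberwise_of_maps_to (g := Finset.card)
    (t := Finset.range (H.verts.card + 1))
    (fun M hM => by
      have := matching_card_bound hwf hun hM
      have : M.card ≤ H.verts.card := le_trans (Nat.le_mul_of_pos_left _ (by omega)) this
      simp only [Finset.mem_range]; omega)]
  refine Finset.sum_congr rfl (fun k _ => ?_)
  have : ∀ M ∈ (matchings H.edges).filter (fun M => M.card = k),
      (-1 : ℝ) ^ M.card * x ^ (H.verts.card - r * M.card)
        = (-1 : ℝ) ^ k * x ^ (H.verts.card - r * k) := by
    intro M hM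
    have := (Finset.mem_filter.1 hM).2
    rw [this]
  rw [Finset.sum_congr rfl this, Finset.sum_const, nsmul_eq_mul]
  have hcount : ((matchings H.edges).filter (fun M => M.card = k)).card
      = H.matchCount k := by
    rw [matchCount, matchings, Finset.filter_filter]
    congr 1
    apply Finset.filter_congr
    intro M _
    tauto
  rw [hcount]; ring



section Path
variable {α : Type*} (r : ℕ) (w : ℕ → α)

/-- the `i`-th edge of the loose path along `w` (0-indexed). -/
def pE (i : ℕ) : Finset α := (Finset.Icc (i * (r - 1)) ((i + 1) * (r - 1))).image w

variable {r w}
variable {p : ℕ} (hr : 2 ≤ r) (hw : Set.InjOn w (Set.Iic (p * (r - 1))))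

include hr hw

lemma mem_pE_iff {t j : ℕ} (ht : t ≤ p * (r - 1)) (hj : j < p) :
    w t ∈ pE r w j ↔ t ∈ Finset.Icc (j * (r - 1)) ((j + 1) * (r - 1)) := by
  constructor
  · intro h
    rcases Finset.mem_image.1 h with ⟨s, hs, hws⟩
    have hsle : s ≤ p * (r - 1) := by
      have := (Finset.mem_Icc.1 hs).2
      calc s ≤ (j + 1) * (r - 1) := this
        _ ≤ p * (r - 1) := Nat.mul_le_mul_right _ (by omega)
    have : s = t := hw (by simpa using hsle) (by simpa using ht) hws
    rwa [← this]
  · intro h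
    exact Finset.mem_image_of_mem w h

lemma pE_card {j : ℕ} (hj : j < p) : (pE r w j).card = r := by
  rw [pE]
  rw [Finset.card_image_of_injOn]
  · rw [Nat.card_Icc]
    have : (j + 1) * (r - 1) = j * (r - 1) + (r - 1) := by ring
    omega
  · intro a ha b hb hab
    refine hw ?_ ?_ hab
    · have := (Finset.mem_Icc.1 ha).2
      simp only [Set.mem_Iic]
      calc a ≤ (j + 1) * (r - 1) := this
        _ ≤ p * (r - 1) := Nat.mul_le_mul_right _ (by omega)
    · have := (Finset.mem_Icc.1 hb).2
      simp only [Set.mem_Iic]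
      calc b ≤ (j + 1) * (r - 1) := this
        _ ≤ p * (r - 1) := Nat.mul_le_mul_right _ (by omega)

lemma pE_inj {i j : ℕ} (hi : i < p) (hj : j < p) (h : pE r w i = pE r w j) : i = j := by
  have h1 : w (i * (r - 1)) ∈ pE r w j := by
    rw [← h]
    exact Finset.mem_image_of_mem w (Finset.mem_Icc.2 ⟨le_refl _, by
      have : i * (r-1) ≤ (i+1) * (r-1) := Nat.mul_le_mul_right _ (by omega); exact this⟩)
  have h2 : w (j * (r - 1)) ∈ pE r w i := by
    rw [h]
    exact Finset.mem_image_of_mem w (Finset.mem_Icc.2 ⟨le_refl _, by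
      have : j * (r-1) ≤ (j+1) * (r-1) := Nat.mul_le_mul_right _ (by omega); exact this⟩)
  have b1 : i * (r - 1) ∈ Finset.Icc (j * (r - 1)) ((j + 1) * (r - 1)) :=
    (mem_pE_iff hr hw (Nat.mul_le_mul_right _ (by omega)) hj).1 h1
  have b2 : j * (r - 1) ∈ Finset.Icc (i * (r - 1)) ((i + 1) * (r - 1)) :=
    (mem_pE_iff hr hw (Nat.mul_le_mul_right _ (by omega)) hi).1 h2
  have e1 := (Finset.mem_Icc.1 b1).1
  have e2 := (Finset.mem_Icc.1 b2).1
  have : i * (r - 1) = j * (r - 1) := le_antisymm e2 e1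
  exact Nat.eq_of_mul_eq_mul_right (by omega) this

lemma pE_disjoint {i j : ℕ} (hi : i < p) (hj : j < p) (h : i + 2 ≤ j) :
    Disjoint (pE r w i) (pE r w j) := by
  rw [Finset.disjoint_left]
  intro a hai haj
  rcases Finset.mem_image.1 hai with ⟨s, hs, rfl⟩
  have hsle : s ≤ p * (r - 1) := le_trans (Finset.mem_Icc.1 hs).2
    (Nat.mul_le_mul_right _ (by omega))
  have := (mem_pE_iff hr hw hsle hj).1 haj
  have c1 := Finset.mem_Icc.1 hs
  have c2 := Finset.mem_Icc.1 this
  -- s ≤ (i+1)(r-1) and s ≥ j(r-1) ≥ (i+2)(r-1) > (i+1)(r-1)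
  have h3 : (i + 2) * (r - 1) ≤ j * (r - 1) := Nat.mul_le_mul_right _ h
  have h4 : (i + 1) * (r - 1) < (i + 2) * (r - 1) := by
    have h0 : 0 < r - 1 := by omega
    exact (Nat.mul_lt_mul_right h0).mpr (by omega)
  omega

lemma pE_not_disjoint {i j : ℕ} (hj : j < p) (h : j = i + 1) :
    ¬ Disjoint (pE r w i) (pE r w j) := by
  intro hd
  have hmem : w (j * (r - 1)) ∈ pE r w i := by
    apply Finset.mem_image_of_mem
    rw [Finset.mem_Icc]
    constructor
    · subst h; exact Nat.mul_le_mul_right _ (by omega)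
    · subst h; exact le_refl _
  have hmem2 : w (j * (r - 1)) ∈ pE r w j := by
    apply Finset.mem_image_of_mem
    rw [Finset.mem_Icc]
    exact ⟨le_refl _, Nat.mul_le_mul_right _ (by omega)⟩
  exact Finset.disjoint_left.1 hd hmem hmem2

lemma isMatching_image_iff {I : Finset ℕ} (hI : I ⊆ Finset.range p) :
    FinHypergraph.IsMatchingSet (I.image (pE r w)) ↔ Sparse I := by
  constructor
  · intro hm a ha ha1
    have hlt : a + 1 < p := Finset.mem_range.1 (hI ha1)
    have hne : pE r w a ≠ pE r w (a + 1) := fun h =>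
      by have := pE_inj hr hw (by omega) hlt h; omega
    have := hm _ (Finset.mem_image_of_mem _ ha) _ (Finset.mem_image_of_mem _ ha1) hne
    exact pE_not_disjoint hr hw hlt rfl this
  · intro hsp e he f hf hne
    rcases Finset.mem_image.1 he with ⟨i, hi, rfl⟩
    rcases Finset.mem_image.1 hf with ⟨j, hj, rfl⟩
    have hip : i < p := Finset.mem_range.1 (hI hi)
    have hjp : j < p := Finset.mem_range.1 (hI hj)
    have hij : i ≠ j := fun h => hne (by rw [h])
    have : i + 2 ≤ j ∨ j + 2 ≤ i := by
      rcases Nat.lt_or_ge i j with h | h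
      · left
        by_contra hc
        have : j = i + 1 := by omega
        exact hsp i hi (this ▸ hj)
      · right
        by_contra hc
        have : i = j + 1 := by omega
        exact hsp j hj (this ▸ hi)
    rcases this with h | h
    · exact pE_disjoint hr hw hip hjp h
    · exact (pE_disjoint hr hw hjp hip h).symm

lemma pE_injOn_sparse : Set.InjOn (fun I : Finset ℕ => I.image (pE r w)) ↑(sparseSets p) := by
  intro I hI J hJ h
  have hIr := (mem_sparseSets.1 (Finset.mem_coe.1 hI)).1
  have hJr := (mem_sparseSets.1 (Finset.mem_coe.1 hJ)).1
  simp only at h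
  ext i
  constructor
  · intro hi
    have : pE r w i ∈ J.image (pE r w) := h ▸ Finset.mem_image_of_mem _ hi
    rcases Finset.mem_image.1 this with ⟨j, hj, hje⟩
    have := pE_inj hr hw (Finset.mem_range.1 (hJr hj)) (Finset.mem_range.1 (hIr hi)) hje
    rwa [← this]
  · intro hi
    have : pE r w i ∈ I.image (pE r w) := h ▸ Finset.mem_image_of_mem _ hi
    rcases Finset.mem_image.1 this with ⟨j, hj, hje⟩
    have := pE_inj hr hw (Finset.mem_range.1 (hIr hj)) (Finset.mem_range.1 (hJr hi)) hje
    rwa [← this]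

lemma card_image_pE {I : Finset ℕ} (hI : I ⊆ Finset.range p) :
    (I.image (pE r w)).card = I.card := by
  apply Finset.card_image_of_injOn
  intro a ha b hb h
  exact pE_inj hr hw (Finset.mem_range.1 (hI ha)) (Finset.mem_range.1 (hI hb)) h

lemma mem_image_pE_iff {I : Finset ℕ} (hI : I ⊆ Finset.range p) {q : ℕ} (hq : q < p) :
    pE r w q ∈ I.image (pE r w) ↔ q ∈ I := by
  constructor
  · intro h
    rcases Finset.mem_image.1 h with ⟨j, hj, hje⟩
    have := pE_inj hr hw (Finset.mem_range.1 (hI hj)) hq hje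
    rwa [← this]
  · exact Finset.mem_image_of_mem _


lemma matchings_loosePath :
    matchings (loosePathEdges r p w) = (sparseSets p).image (fun I => I.image (pE r w)) := by
  have hE : loosePathEdges r p w = (Finset.range p).image (pE r w) := rfl
  ext M
  rw [mem_matchings, Finset.mem_image]
  constructor
  · rintro ⟨hsub, hm⟩
    set I := (Finset.range p).filter (fun i => pE r w i ∈ M) with hIdef
    have hIr : I ⊆ Finset.range p := Finset.filter_subset _ _
    have hMI : M = I.image (pE r w) := by
      ext e
      constructor
      · intro he
        have := hsub he
        rw [hE] at this
        rcases Finset.mem_image.1 this with ⟨i, hi, rfl⟩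
        exact Finset.mem_image_of_mem _ (Finset.mem_filter.2 ⟨hi, he⟩)
      · intro he
        rcases Finset.mem_image.1 he with ⟨i, hi, rfl⟩
        exact (Finset.mem_filter.1 hi).2
    refine ⟨I, ?_, hMI.symm⟩
    rw [mem_sparseSets]
    exact ⟨hIr, (isMatching_image_iff hr hw hIr).1 (hMI ▸ hm)⟩
  · rintro ⟨I, hI, rfl⟩
    obtain ⟨hIr, hIs⟩ := mem_sparseSets.1 hI
    refine ⟨?_, (isMatching_image_iff hr hw hIr).2 hIs⟩
    rw [hE]
    exact Finset.image_subset_image hIr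

lemma sum_matchings_pE (f : ℕ → ℝ) :
    ∑ M ∈ matchings (loosePathEdges r p w), f M.card = ∑ I ∈ sparseSets p, f I.card := by
  rw [matchings_loosePath hr hw,
    Finset.sum_image (fun I hI J hJ h => pE_injOn_sparse hr hw hI hJ h)]
  exact Finset.sum_congr rfl fun I hI => by
    rw [card_image_pE hr hw (mem_sparseSets.1 hI).1]

lemma sum_matchings_avoid_pE (f : ℕ → ℝ) {q : ℕ} (hq : q < p) :
    ∑ M ∈ (matchings (loosePathEdges r p w)).filter (fun M => pE r w q ∉ M), f M.card
      = ∑ I ∈ (sparseSets p).filter (fun I => q ∉ I), f I.card := by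
  rw [matchings_loosePath hr hw]
  rw [Finset.filter_image]
  rw [Finset.sum_image (fun I hI J hJ h =>
    pE_injOn_sparse hr hw (Finset.mem_coe.2 (Finset.mem_of_mem_filter I hI))
      (Finset.mem_coe.2 (Finset.mem_of_mem_filter J hJ)) h)]
  have hfil : (sparseSets p).filter (fun I => pE r w q ∉ I.image (pE r w))
      = (sparseSets p).filter (fun I => q ∉ I) := by
    apply Finset.filter_congr
    intro I hI
    rw [mem_image_pE_iff hr hw (mem_sparseSets.1 hI).1 hq]
  rw [hfil]
  exact Finset.sum_congr rfl fun I hI => by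
    rw [card_image_pE hr hw (mem_sparseSets.1 (Finset.mem_of_mem_filter I hI)).1]

end Path

lemma loosePath_wf_un {α : Type*} {r p : ℕ} (hr : 2 ≤ r) (w : ℕ → α)
    (hw : Set.InjOn w (Set.Iic (p * (r - 1)))) :
    (∀ e ∈ loosePathEdges r p w, e ⊆ (Finset.Icc 0 (p * (r - 1))).image w)
      ∧ (∀ e ∈ loosePathEdges r p w, e.card = r)
      ∧ ((Finset.Icc 0 (p * (r - 1))).image w).card = p * (r - 1) + 1 := by
  refine ⟨?_, ?_, ?_⟩
  · intro e he a ha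
    rcases Finset.mem_image.1 he with ⟨i, hi, rfl⟩
    rcases Finset.mem_image.1 ha with ⟨t, ht, rfl⟩
    apply Finset.mem_image_of_mem
    rw [Finset.mem_Icc]
    have h1 := Finset.mem_Icc.1 ht
    have h2 : (i + 1) * (r - 1) ≤ p * (r - 1) :=
      Nat.mul_le_mul_right _ (Finset.mem_range.1 hi)
    omega
  · intro e he
    rcases Finset.mem_image.1 he with ⟨i, hi, rfl⟩
    exact pE_card hr hw (Finset.mem_range.1 hi)
  · rw [Finset.card_image_of_injOn, Nat.card_Icc]
    · omega
    · intro a ha b hb h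
      refine hw ?_ ?_ h
      · simpa using (Finset.mem_Icc.1 (Finset.mem_coe.1 ha)).2
      · simpa using (Finset.mem_Icc.1 (Finset.mem_coe.1 hb)).2

lemma matchPoly_loosePath {α : Type*} {r p : ℕ} (hr : 2 ≤ r) {P : FinHypergraph α}
    (hP : IsLoosePath r p P) (x : ℝ) :
    P.matchPoly r x
      = ∑ I ∈ sparseSets p, (-1 : ℝ) ^ I.card * x ^ (p * (r - 1) + 1 - r * I.card) := by
  obtain ⟨w, hw, hV, hE⟩ := hP
  obtain ⟨hwf, hun, hcard⟩ := loosePath_wf_un hr w hw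
  have hwf' : P.WellFormed := by
    intro e he
    rw [hE] at he
    rw [hV]
    exact hwf e he
  have hun' : P.Uniform r := by
    intro e he
    rw [hE] at he
    exact hun e he
  have hc : P.verts.card = p * (r - 1) + 1 := by rw [hV]; exact hcard
  rw [matchPoly_eq_msum (by omega) hwf' hun' x, hE, msum, hc]
  exact sum_matchings_pE hr hw (fun c => (-1 : ℝ) ^ c * x ^ (p * (r - 1) + 1 - r * c))

lemma sparse_split (r b d k : ℕ) (hr : 2 ≤ r) (hb : 1 ≤ b) (hbd : b + 1 ≤ d)
    (hk : 2 ≤ k * (r - 1)) (x : ℝ) :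
    ∑ I ∈ (sparseSets d).filter (fun I => b - 1 ∉ I),
        (-1 : ℝ) ^ I.card * x ^ ((d - 1) * (r - 1) + k * (r - 1) - r * I.card)
      = x ^ (k * (r - 1) - 2)
        * (∑ I ∈ sparseSets (b - 1),
            (-1 : ℝ) ^ I.card * x ^ ((b - 1) * (r - 1) + 1 - r * I.card))
        * (∑ I ∈ sparseSets (d - b),
            (-1 : ℝ) ^ I.card * x ^ ((d - b) * (r - 1) + 1 - r * I.card)) := by
  rw [mul_assoc, Finset.sum_mul_sum]
  simp only [Finset.mul_sum]
  rw [← Finset.sum_product']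
  rw [eq_comm]
  apply Finset.sum_nbij' (i := fun P : Finset ℕ × Finset ℕ => P.1 ∪ P.2.image (· + b))
    (j := fun I => (I.filter (· < b), (I.filter (fun a => b ≤ a)).image (fun a => a - b)))
  · -- membership forward
    rintro ⟨I1, I2⟩ hP
    rw [Finset.mem_product] at hP
    obtain ⟨h1, h2⟩ := hP
    obtain ⟨h1r, h1s⟩ := mem_sparseSets.1 h1
    obtain ⟨h2r, h2s⟩ := mem_sparseSets.1 h2
    rw [Finset.mem_filter, mem_sparseSets]
    have hmem1 : ∀ a ∈ I1, a < b - 1 := fun a ha => Finset.mem_range.1 (h1r ha)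
    have hmem2 : ∀ a ∈ I2, a < d - b := fun a ha => Finset.mem_range.1 (h2r ha)
    refine ⟨⟨?_, ?_⟩, ?_⟩
    · intro a ha
      rw [Finset.mem_union] at ha
      rw [Finset.mem_range]
      rcases ha with ha | ha
      · have := hmem1 a ha; omega
      · rcases Finset.mem_image.1 ha with ⟨c, hc, rfl⟩
        have := hmem2 c hc; omega
    · intro a ha ha1
      rw [Finset.mem_union] at ha ha1
      rcases ha with ha | ha
      · rcases ha1 with ha1 | ha1
        · exact h1s a ha ha1
        · rcases Finset.mem_image.1 ha1 with ⟨c, hc, hce⟩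
          have := hmem1 a ha; omega
      · rcases Finset.mem_image.1 ha with ⟨c, hc, rfl⟩
        rcases ha1 with ha1 | ha1
        · have := hmem1 _ ha1; omega
        · rcases Finset.mem_image.1 ha1 with ⟨c', hc', hce⟩
          have : c' = c + 1 := by omega
          exact h2s c hc (this ▸ hc')
    · intro hmem
      rw [Finset.mem_union] at hmem
      rcases hmem with h | h
      · have := hmem1 _ h; omega
      · rcases Finset.mem_image.1 h with ⟨c, hc, hce⟩
        omega
  · -- membership backward
    intro I hI
    rw [Finset.mem_filter, mem_sparseSets] at hI
    obtain ⟨⟨hIr, hIs⟩, hIb⟩ := hI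
    rw [Finset.mem_product, mem_sparseSets, mem_sparseSets]
    refine ⟨⟨?_, ?_⟩, ?_, ?_⟩
    · intro a ha
      rw [Finset.mem_filter] at ha
      rw [Finset.mem_range]
      have : a ≠ b - 1 := fun h => hIb (h ▸ ha.1)
      omega
    · intro a ha ha1
      rw [Finset.mem_filter] at ha ha1
      exact hIs a ha.1 ha1.1
    · intro a ha
      rcases Finset.mem_image.1 ha with ⟨c, hc, rfl⟩
      rw [Finset.mem_filter] at hc
      have := Finset.mem_range.1 (hIr hc.1)
      rw [Finset.mem_range]
      omega
    · intro a ha ha1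
      rcases Finset.mem_image.1 ha with ⟨c, hc, rfl⟩
      rcases Finset.mem_image.1 ha1 with ⟨c', hc', hce⟩
      rw [Finset.mem_filter] at hc hc'
      have : c' = c + 1 := by omega
      exact hIs c hc.1 (this ▸ hc'.1)
  · -- left inverse
    rintro ⟨I1, I2⟩ hP
    rw [Finset.mem_product] at hP
    obtain ⟨h1, h2⟩ := hP
    have hmem1 : ∀ a ∈ I1, a < b - 1 := fun a ha =>
      Finset.mem_range.1 ((mem_sparseSets.1 h1).1 ha)
    ext1
    · ext a
      simp only [Finset.mem_filter, Finset.mem_union, Finset.mem_image]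
      constructor
      · rintro ⟨h | ⟨c, hc, rfl⟩, hlt⟩
        · exact h
        · omega
      · intro h
        exact ⟨Or.inl h, by have := hmem1 a h; omega⟩
    · ext a
      simp only [Finset.mem_image, Finset.mem_filter, Finset.mem_union]
      constructor
      · rintro ⟨c, ⟨hc | hc, hcb⟩, rfl⟩
        · have := hmem1 c hc; omega
        · rcases hc with ⟨c', hc', rfl⟩
          simpa using hc'
      · intro ha
        exact ⟨a + b, ⟨Or.inr ⟨a, ha, rfl⟩, by omega⟩, by omega⟩
  · -- right inverse
    intro I hI
    rw [Finset.mem_filter, mem_sparseSets] at hI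
    ext a
    simp only [Finset.mem_union, Finset.mem_filter, Finset.mem_image]
    constructor
    · rintro (⟨ha, _⟩ | ⟨c, ⟨⟨c', ⟨hc', hbc'⟩, rfl⟩, rfl⟩⟩)
      · exact ha
      · simpa [Nat.sub_add_cancel hbc'] using hc'
    · intro ha
      rcases Nat.lt_or_ge a b with h | h
      · exact Or.inl ⟨ha, h⟩
      · exact Or.inr ⟨a - b, ⟨a, ⟨ha, h⟩, rfl⟩, by omega⟩
  · -- weight equality
    rintro ⟨I1, I2⟩ hP
    dsimp only
    rw [Finset.mem_product] at hP
    obtain ⟨h1, h2⟩ := hP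
    simp only at h1 h2
    have hc1 := sparse_r_card hr h1
    have hc2 := sparse_r_card hr h2
    have hmem1 : ∀ a ∈ I1, a < b - 1 := fun a ha =>
      Finset.mem_range.1 ((mem_sparseSets.1 h1).1 ha)
    have hcard : (I1 ∪ I2.image (· + b)).card = I1.card + I2.card := by
      rw [Finset.card_union_of_disjoint, Finset.card_image_of_injective _
        (add_left_injective b)]
      rw [Finset.disjoint_left]
      intro a ha ha'
      rcases Finset.mem_image.1 ha' with ⟨c, hc, rfl⟩
      have := hmem1 _ ha; omega
    rw [hcard]
    have hsum : (b - 1) * (r - 1) + (d - b) * (r - 1) = (d - 1) * (r - 1) := by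
      rw [← Nat.add_mul]
      congr 1
      omega
    have hexp : (d - 1) * (r - 1) + k * (r - 1) - r * (I1.card + I2.card)
        = (k * (r - 1) - 2) + (((b - 1) * (r - 1) + 1 - r * I1.card)
          + ((d - b) * (r - 1) + 1 - r * I2.card)) := by
      have e1 : r * (I1.card + I2.card) = r * I1.card + r * I2.card := by ring
      omega
    rw [hexp, pow_add, pow_add, pow_add]
    ring

end MPAux
open MPAux

/-- For `r ≥ 3`, `d ≥ 3`, `m ≥ d + 2` and `b = ⌈d/2⌉`, the supertree
`T_{(m,d,r)}(b)` obtained from the loose path `P_d^r` by attaching `m − d` pendant edges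
at a fixed core vertex of the edge `e_b` satisfies
`φ(T_{(m,d,r)}(b), x) = x^((m−d)(r−1))·φ(P_d^r, x)
  − (m−d)·x^((m−d)(r−1)−2)·φ(P_{b−1}^r, x)·φ(P_{d−b}^r, x)`. -/
theorem matchPoly_pendant_edges_at_core {α : Type*} (r d m : ℕ)
    (hr : 3 ≤ r) (hd : 3 ≤ d) (hm : d + 2 ≤ m)
    (w : ℕ → α) (hw : Set.InjOn w (Set.Iic (d * (r - 1))))
    (c : ℕ) (hc1 : ((d + 1) / 2 - 1) * (r - 1) < c) (hc2 : c < ((d + 1) / 2) * (r - 1))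
    (T : FinHypergraph α)
    (hT : IsPendantEdgesAttach r (m - d) (pathHypergraph r d w) (w c) T)
    (P1 P2 : FinHypergraph α)
    (hP1 : IsLoosePath r ((d + 1) / 2 - 1) P1)
    (hP2 : IsLoosePath r (d - (d + 1) / 2) P2) :
    ∀ x : ℝ, T.matchPoly r x
      = x ^ ((m - d) * (r - 1)) * (pathHypergraph r d w).matchPoly r x
        - ((m - d : ℕ) : ℝ) * x ^ ((m - d) * (r - 1) - 2) *
            P1.matchPoly r x * P2.matchPoly r x := by
  intro x
  have hr' : 2 ≤ r := by omega
  set b := (d + 1) / 2 with hbdef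
  have hb1 : 2 ≤ b := by omega
  have hbd : b + 1 ≤ d := by omega
  have hq : b - 1 < d := by omega
  have hk2 : 2 ≤ (m - d) * (r - 1) := by
    have : 2 * 1 ≤ (m - d) * (r - 1) := Nat.mul_le_mul (by omega) (by omega)
    omega
  obtain ⟨hu, F, hFcard, hFdisjV, hFpair, hTverts, hTedges⟩ := hT
  set V : Finset α := (Finset.Icc 0 (d * (r - 1))).image w with hVdef
  set E : Finset (Finset α) := loosePathEdges r d w with hEdef
  have hPv : (pathHypergraph r d w).verts = V := rfl
  have hPe : (pathHypergraph r d w).edges = E := rfl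
  rw [hPv] at hu hFdisjV hTverts
  rw [hPe] at hTedges
  obtain ⟨hwfE, hunE, hcardV⟩ := loosePath_wf_un (p := d) hr' w hw
  set g : Fin (m - d) → Finset α := fun i => insert (w c) (F i) with hgdef
  have hErange : E = (Finset.range d).image (pE r w) := rfl
  have hcge : c ≤ d * (r - 1) := by
    have : b * (r - 1) ≤ d * (r - 1) := Nat.mul_le_mul_right _ (by omega)
    omega
  have hwc_pE : ∀ j < d, (w c ∈ pE r w j ↔ j = b - 1) := by
    intro j hj
    constructor
    · intro h
      have hmem := (mem_pE_iff hr' hw hcge hj).1 h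
      rw [Finset.mem_Icc] at hmem
      by_contra hne
      rcases Nat.lt_or_ge j (b - 1) with hlt | hge
      · have : (j + 1) * (r - 1) ≤ (b - 1) * (r - 1) :=
          Nat.mul_le_mul_right _ (by omega)
        omega
      · have hbj : b ≤ j := by omega
        have : b * (r - 1) ≤ j * (r - 1) := Nat.mul_le_mul_right _ hbj
        omega
    · rintro rfl
      apply Finset.mem_image_of_mem
      rw [Finset.mem_Icc]
      have hb1' : b - 1 + 1 = b := by omega
      rw [hb1']
      omega
  have hwcV : w c ∈ V := hu
  have hwcF : ∀ i, w c ∉ F i := fun i h => Finset.disjoint_left.1 (hFdisjV i) h hwcV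
  have hgE : ∀ i, g i ∉ E := by
    intro i hi
    obtain ⟨a, ha⟩ := Finset.card_pos.1 (show 0 < (F i).card by rw [hFcard]; omega)
    have haV : a ∈ V := hwfE _ hi (Finset.mem_insert_of_mem ha)
    exact Finset.disjoint_left.1 (hFdisjV i) ha haV
  have hgcard : ∀ i, (g i).card = r := by
    intro i
    rw [hgdef]
    simp only
    rw [Finset.card_insert_of_notMem (hwcF i), hFcard]
    omega
  have hginj : ∀ i j, g i = g j → i = j := by
    intro i j hij
    by_contra hne
    obtain ⟨a, ha⟩ := Finset.card_pos.1 (show 0 < (F i).card by rw [hFcard]; omega)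
    have ha' : a ∈ g j := hij ▸ Finset.mem_insert_of_mem ha
    rcases Finset.mem_insert.1 ha' with h | h
    · exact Finset.disjoint_left.1 (hFdisjV i) ha (h ▸ hwcV)
    · exact Finset.disjoint_left.1 (hFpair i j hne) ha h
  have hpEbE : pE r w (b - 1) ∈ E := by
    rw [hErange]
    exact Finset.mem_image_of_mem _ (Finset.mem_range.2 hq)
  have hgdisj : ∀ i, ∀ e ∈ E, (Disjoint (g i) e ↔ e ≠ pE r w (b - 1)) := by
    intro i e he
    constructor
    · intro hdis heq
      rw [heq] at hdis
      have hwce : w c ∈ pE r w (b - 1) := (hwc_pE (b - 1) hq).2 rfl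
      exact Finset.disjoint_left.1 hdis (Finset.mem_insert_self _ _) hwce
    · intro hne
      rw [hErange] at he
      rcases Finset.mem_image.1 he with ⟨j, hj, rfl⟩
      have hjd := Finset.mem_range.1 hj
      rw [Finset.disjoint_left]
      intro a ha hae
      rcases Finset.mem_insert.1 ha with rfl | h
      · have := (hwc_pE j hjd).1 hae
        exact hne (by rw [this])
      · have haV : a ∈ V := hwfE _ (Finset.mem_image_of_mem _ hj) hae
        exact Finset.disjoint_left.1 (hFdisjV i) h haV
  have hTwf : T.WellFormed := by
    intro e he a ha
    rw [hTedges] at he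
    rw [hTverts]
    rcases Finset.mem_union.1 he with h | h
    · exact Finset.mem_union_left _ (hwfE e h ha)
    · rcases Finset.mem_image.1 h with ⟨i, _, rfl⟩
      rcases Finset.mem_insert.1 ha with rfl | h'
      · exact Finset.mem_union_left _ hwcV
      · exact Finset.mem_union_right _
          (Finset.mem_biUnion.2 ⟨i, Finset.mem_univ _, h'⟩)
  have hTun : T.Uniform r := by
    intro e he
    rw [hTedges] at he
    rcases Finset.mem_union.1 he with h | h
    · exact hunE e h
    · rcases Finset.mem_image.1 h with ⟨i, _, rfl⟩
      exact hgcard i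
  have hTcard : T.verts.card = d * (r - 1) + 1 + (m - d) * (r - 1) := by
    rw [hTverts, Finset.card_union_of_disjoint, hcardV]
    · congr 1
      rw [Finset.card_biUnion (fun i _ j _ hij => hFpair i j hij)]
      rw [Finset.sum_congr rfl (fun i _ => hFcard i), Finset.sum_const,
        Finset.card_univ, Fintype.card_fin, smul_eq_mul]
    · rw [Finset.disjoint_right]
      intro a ha haV
      rcases Finset.mem_biUnion.1 ha with ⟨i, _, hai⟩
      exact Finset.disjoint_left.1 (hFdisjV i) hai haV
  have hEsubT : E ⊆ T.edges := by rw [hTedges]; exact Finset.subset_union_left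
  -- abbreviations for the three sparse sums
  have hφP : (pathHypergraph r d w).matchPoly r x
      = ∑ I ∈ sparseSets d, (-1 : ℝ) ^ I.card * x ^ (d * (r - 1) + 1 - r * I.card) :=
    matchPoly_loosePath hr' ⟨w, hw, rfl, rfl⟩ x
  have hφ1 : P1.matchPoly r x
      = ∑ I ∈ sparseSets (b - 1),
          (-1 : ℝ) ^ I.card * x ^ ((b - 1) * (r - 1) + 1 - r * I.card) :=
    matchPoly_loosePath hr' hP1 x
  have hφ2 : P2.matchPoly r x
      = ∑ I ∈ sparseSets (d - b),
          (-1 : ℝ) ^ I.card * x ^ ((d - b) * (r - 1) + 1 - r * I.card) :=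
    matchPoly_loosePath hr' hP2 x
  set n : ℕ := d * (r - 1) + 1 + (m - d) * (r - 1) with hndef
  rw [matchPoly_eq_msum (by omega) hTwf hTun x, msum, hTcard]
  rw [← Finset.sum_filter_add_sum_filter_not (matchings T.edges) (fun M => M ⊆ E)]
  -- Part 1
  have hpart1set : (matchings T.edges).filter (fun M => M ⊆ E) = matchings E := by
    ext M
    rw [Finset.mem_filter, mem_matchings, mem_matchings]
    constructor
    · rintro ⟨⟨_, hm⟩, hME⟩
      exact ⟨hME, hm⟩
    · rintro ⟨hME, hm⟩
      exact ⟨⟨hME.trans hEsubT, hm⟩, hME⟩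
  have hpart1 : ∑ M ∈ (matchings T.edges).filter (fun M => M ⊆ E),
        (-1 : ℝ) ^ M.card * x ^ (n - r * M.card)
      = x ^ ((m - d) * (r - 1)) * (pathHypergraph r d w).matchPoly r x := by
    rw [hpart1set, hEdef,
      sum_matchings_pE hr' hw (fun cc => (-1 : ℝ) ^ cc * x ^ (n - r * cc)), hφP,
      Finset.mul_sum]
    refine Finset.sum_congr rfl (fun I hI => ?_)
    have hbound := sparse_r_card hr' hI
    have hexp : n - r * I.card = (m - d) * (r - 1) + (d * (r - 1) + 1 - r * I.card) := by
      omega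
    rw [hexp, pow_add]
    ring
  -- Part 2
  set B : Finset (Finset (Finset α)) :=
    (matchings E).filter (fun M => pE r w (b - 1) ∉ M) with hBdef
  have hpart2set : (matchings T.edges).filter (fun M => ¬ M ⊆ E)
      = ((Finset.univ : Finset (Fin (m - d))) ×ˢ B).image
          (fun P => insert (g P.1) P.2) := by
    ext M
    rw [Finset.mem_filter, mem_matchings, Finset.mem_image]
    constructor
    · rintro ⟨⟨hMT, hm⟩, hnsub⟩
      obtain ⟨e, heM, heE⟩ := Finset.not_subset.1 hnsub
      have heT := hMT heM
      rw [hTedges] at heT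
      rcases Finset.mem_union.1 heT with h | h
      · exact absurd h heE
      rcases Finset.mem_image.1 h with ⟨i, _, rfl⟩
      set M' := M.erase (g i) with hM'def
      have hgiM : g i ∈ M := heM
      have hM'E : M' ⊆ E := by
        intro f hf
        have hfM := Finset.mem_of_mem_erase hf
        have hfne : f ≠ g i := Finset.ne_of_mem_erase hf
        have hfT := hMT hfM
        rw [hTedges] at hfT
        rcases Finset.mem_union.1 hfT with h' | h'
        · exact h'
        · rcases Finset.mem_image.1 h' with ⟨j, _, rfl⟩
          exfalso
          have hdis := hm _ hgiM _ hfM (fun hh => hfne hh.symm)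
          exact Finset.disjoint_left.1 hdis (Finset.mem_insert_self _ _)
            (Finset.mem_insert_self _ _)
      have hm' : IsMatchingSet M' := fun e' he' f' hf' hne =>
        hm e' (Finset.mem_of_mem_erase he') f' (Finset.mem_of_mem_erase hf') hne
      have hbnot : pE r w (b - 1) ∉ M' := by
        intro hmem
        have hMmem := Finset.mem_of_mem_erase hmem
        have hne : g i ≠ pE r w (b - 1) := fun hh => hgE i (hh ▸ hpEbE)
        have hdis := hm _ hgiM _ hMmem hne
        exact ((hgdisj i _ hpEbE).1 hdis) rfl
      refine ⟨(i, M'), Finset.mem_product.2 ⟨Finset.mem_univ _, ?_⟩, ?_⟩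
      · rw [hBdef, Finset.mem_filter, mem_matchings]
        exact ⟨⟨hM'E, hm'⟩, hbnot⟩
      · simp only
        rw [hM'def, Finset.insert_erase hgiM]
    · rintro ⟨⟨i, M'⟩, hmem, rfl⟩
      rw [Finset.mem_product] at hmem
      obtain ⟨-, hM'B⟩ := hmem
      rw [hBdef, Finset.mem_filter, mem_matchings] at hM'B
      obtain ⟨⟨hM'E, hm'⟩, hbnot⟩ := hM'B
      simp only
      have hgisub : g i ∈ T.edges := by
        rw [hTedges]
        exact Finset.mem_union_right _ (Finset.mem_image_of_mem _ (Finset.mem_univ i))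
      refine ⟨⟨?_, ?_⟩, ?_⟩
      · intro f hf
        rcases Finset.mem_insert.1 hf with rfl | h
        · exact hgisub
        · exact hEsubT (hM'E h)
      · intro e' he' f' hf' hne
        rcases Finset.mem_insert.1 he' with rfl | he'
        · rcases Finset.mem_insert.1 hf' with rfl | hf'
          · exact absurd rfl hne
          · exact (hgdisj i _ (hM'E hf')).2 (fun hh => hbnot (hh ▸ hf'))
        · rcases Finset.mem_insert.1 hf' with rfl | hf'
          · exact ((hgdisj i _ (hM'E he')).2 (fun hh => hbnot (hh ▸ he'))).symm
          · exact hm' _ he' _ hf' hne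
      · intro hsub
        exact hgE i (hsub (Finset.mem_insert_self _ _))
  have hinj : ∀ P₁ ∈ (Finset.univ : Finset (Fin (m - d))) ×ˢ B,
      ∀ P₂ ∈ (Finset.univ : Finset (Fin (m - d))) ×ˢ B,
      insert (g P₁.1) P₁.2 = insert (g P₂.1) P₂.2 → P₁ = P₂ := by
    rintro ⟨i, M₁⟩ h₁ ⟨j, M₂⟩ h₂ heq
    rw [Finset.mem_product] at h₁ h₂
    have hM₁E : M₁ ⊆ E := (mem_matchings.1 (Finset.mem_of_mem_filter _ h₁.2)).1
    have hM₂E : M₂ ⊆ E := (mem_matchings.1 (Finset.mem_of_mem_filter _ h₂.2)).1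
    simp only at heq
    have hgij : g i = g j := by
      have : g j ∈ insert (g i) M₁ := heq ▸ Finset.mem_insert_self _ _
      rcases Finset.mem_insert.1 this with h | h
      · exact h.symm
      · exact absurd (hM₁E h) (hgE j)
    have hij : i = j := hginj _ _ hgij
    subst hij
    have hgiM₁ : g i ∉ M₁ := fun h => hgE i (hM₁E h)
    have hgiM₂ : g i ∉ M₂ := fun h => hgE i (hM₂E h)
    have : M₁ = M₂ := by
      rw [← Finset.erase_insert hgiM₁, ← Finset.erase_insert hgiM₂, heq]
    rw [this]
  have hpart2 : ∑ M ∈ (matchings T.edges).filter (fun M => ¬ M ⊆ E),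
        (-1 : ℝ) ^ M.card * x ^ (n - r * M.card)
      = - (((m - d : ℕ) : ℝ) * x ^ ((m - d) * (r - 1) - 2)
          * P1.matchPoly r x * P2.matchPoly r x) := by
    rw [hpart2set, Finset.sum_image hinj, Finset.sum_product]
    have hinner : ∀ i : Fin (m - d),
        ∑ M' ∈ B, (-1 : ℝ) ^ (insert (g i) M').card
            * x ^ (n - r * (insert (g i) M').card)
        = ∑ M' ∈ B, (-1 : ℝ) ^ (M'.card + 1) * x ^ (n - r * (M'.card + 1)) := by
      intro i
      refine Finset.sum_congr rfl (fun M' hM' => ?_)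
      have hM'E : M' ⊆ E := (mem_matchings.1 (Finset.mem_of_mem_filter _ hM')).1
      have : g i ∉ M' := fun h => hgE i (hM'E h)
      rw [Finset.card_insert_of_notMem this]
    rw [Finset.sum_congr rfl (fun i _ => hinner i), Finset.sum_const,
      Finset.card_univ, Fintype.card_fin, nsmul_eq_mul]
    have hBsum : ∑ M' ∈ B, (-1 : ℝ) ^ (M'.card + 1) * x ^ (n - r * (M'.card + 1))
        = ∑ I ∈ (sparseSets d).filter (fun I => b - 1 ∉ I),
            (-1 : ℝ) ^ (I.card + 1) * x ^ (n - r * (I.card + 1)) := by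
      rw [hBdef, hEdef]
      exact sum_matchings_avoid_pE hr' hw
        (fun cc => (-1 : ℝ) ^ (cc + 1) * x ^ (n - r * (cc + 1))) hq
    rw [hBsum]
    have hswitch : ∀ I ∈ (sparseSets d).filter (fun I => b - 1 ∉ I),
        (-1 : ℝ) ^ (I.card + 1) * x ^ (n - r * (I.card + 1))
        = - ((-1 : ℝ) ^ I.card
            * x ^ ((d - 1) * (r - 1) + (m - d) * (r - 1) - r * I.card)) := by
      intro I hI
      have hbound := sparse_r_card hr' (Finset.mem_of_mem_filter I hI)
      have hdd : (d - 1) * (r - 1) + (r - 1) = d * (r - 1) := by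
        rw [← Nat.succ_mul]
        congr 2
        omega
      have hexp : n - r * (I.card + 1)
          = (d - 1) * (r - 1) + (m - d) * (r - 1) - r * I.card := by
        have e1 : r * (I.card + 1) = r * I.card + r := by ring
        omega
      rw [hexp, pow_succ]
      ring
    rw [Finset.sum_congr rfl hswitch, Finset.sum_neg_distrib]
    rw [sparse_split r b d (m - d) hr' (by omega) hbd hk2 x]
    rw [hφ1, hφ2]
    ring
  rw [hpart1, hpart2]
  ring
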